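/- arXiv:1505.01312 — 4 statements merged into one kernel-verified Lean document; each statement's English description precedes it below -/
import Mathlib

section
/- Let X be a complex Banach space, let E, F ∈ L(X) be invertible positive operators, and let T ∈ L(X). Then T is weighted EP with weights E and F if and only if there exist complex Banach spaces X₁ and X₂, a bounded linear isomorphism T₁ ∈ L(X₁), and a bounded linear isomorphism J : X₁ ⊕₁ X₂ → X such that T = J (T₁ ⊕ 0) J^{-1}, T^†_{E,F} = J (T₁^{-1} ⊕ 0) J^{-1}, J (I_{X₁} ⊕ 0) J^{-1} ∈ H(L(X)^E) and J (0 ⊕ I_{X₂}) J^{-1} ∈ H(L(X)^F). -/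
/-!
Common definitions: hermitian and positive elements of a complex unital Banach
algebra, hermitian elements with respect to the equivalent norm induced by an
invertible positive element (weight), and the weighted Moore–Penrose inverse,
both for Banach algebra elements and for bounded linear operators between
Banach spaces.
-/

noncomputable section

/-- An element `a` of a complex unital Banach algebra is hermitian if
`‖exp(i t a)‖ = 1` for all real `t`. -/
def IsHermitianEl {A : Type*} [NormedRing A] [NormedAlgebra ℂ A] (a : A) : Prop :=
  ∀ t : ℝ, ‖NormedSpace.exp ((Complex.I * (t : ℂ)) • a)‖ = 1

/-- An element of a complex unital Banach algebra is positive if it is hermitian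
and its spectrum is contained in `[0, ∞)`. -/
def IsPositiveEl {A : Type*} [NormedRing A] [NormedAlgebra ℂ A] (a : A) : Prop :=
  IsHermitianEl a ∧ spectrum ℂ a ⊆ Complex.ofReal '' Set.Ici (0 : ℝ)

/-- `a` is hermitian in `A^u`, i.e. hermitian for the equivalent norm
`‖x‖_u = ‖u^{1/2} x u^{-1/2}‖`, where `u^{1/2}` is the (unique) invertible
positive square root of the invertible positive weight `u`. -/
def IsHermitianWt {A : Type*} [NormedRing A] [NormedAlgebra ℂ A] (u a : A) : Prop :=
  ∃ s : Aˣ, IsPositiveEl (s : A) ∧ ((s : A)) ^ 2 = u ∧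
    ∀ t : ℝ, ‖(s : A) * NormedSpace.exp ((Complex.I * (t : ℂ)) • a) * ((s⁻¹ : Aˣ) : A)‖ = 1

/-- `b` is the weighted Moore–Penrose inverse of `a` with weights `e` and `f`. -/
def IsWMPI {A : Type*} [NormedRing A] [NormedAlgebra ℂ A] (e f a b : A) : Prop :=
  a * b * a = a ∧ b * a * b = b ∧ IsHermitianWt e (a * b) ∧ IsHermitianWt f (b * a)

/-- `a` is weighted EP with weights `e` and `f`. -/
def IsWEP {A : Type*} [NormedRing A] [NormedAlgebra ℂ A] (e f a : A) : Prop :=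
  ∃ b : A, IsWMPI e f a b ∧ a * b = b * a

/-- `S ∈ L(Y,X)` is the weighted Moore–Penrose inverse of `T ∈ L(X,Y)` with
weights `E ∈ L(Y)` and `F ∈ L(X)`. -/
def IsWMPIop {X Y : Type*} [NormedAddCommGroup X] [NormedSpace ℂ X]
    [NormedAddCommGroup Y] [NormedSpace ℂ Y]
    (E : Y →L[ℂ] Y) (F : X →L[ℂ] X) (T : X →L[ℂ] Y) (S : Y →L[ℂ] X) : Prop :=
  (T.comp S).comp T = T ∧ (S.comp T).comp S = S ∧
    IsHermitianWt E (T.comp S) ∧ IsHermitianWt F (S.comp T)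

/-- `T ∈ L(X)` is weighted EP with weights `E` and `F`. -/
def IsWEPop {X : Type*} [NormedAddCommGroup X] [NormedSpace ℂ X]
    (E F T : X →L[ℂ] X) : Prop :=
  ∃ S : X →L[ℂ] X, IsWMPIop E F T S ∧ T.comp S = S.comp T


universe u

/-- The direct sum operator `A₁ ⊕ A₂` on `X₁ ⊕₁ X₂` (the product with the
1-norm `‖x₁ ⊕ x₂‖ = ‖x₁‖ + ‖x₂‖`). -/
def dsumOp {X₁ X₂ : Type*} [NormedAddCommGroup X₁] [NormedSpace ℂ X₁]
    [NormedAddCommGroup X₂] [NormedSpace ℂ X₂]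
    (A₁ : X₁ →L[ℂ] X₁) (A₂ : X₂ →L[ℂ] X₂) :
    WithLp 1 (X₁ × X₂) →L[ℂ] WithLp 1 (X₁ × X₂) :=
  ((WithLp.prodContinuousLinearEquiv 1 ℂ X₁ X₂).symm.toContinuousLinearMap).comp
    ((A₁.prodMap A₂).comp
      (WithLp.prodContinuousLinearEquiv 1 ℂ X₁ X₂).toContinuousLinearMap)

/-- A bundled complex Banach space (used to quantify existentially over Banach
spaces). -/
structure BanachC : Type (u + 1) where
  carrier : Type u
  [grp : NormedAddCommGroup carrier]
  [mod : NormedSpace ℂ carrier]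
  [cpl : CompleteSpace carrier]

attribute [instance] BanachC.grp BanachC.mod BanachC.cpl

/- ### auxiliary lemmas -/

lemma exp_I_smul_one_sub {A : Type*} [NormedRing A] [NormedAlgebra ℂ A] [CompleteSpace A]
    (a : A) (t : ℝ) :
    NormedSpace.exp ((Complex.I * (t : ℂ)) • (1 - a)) =
      Complex.exp (Complex.I * t) • NormedSpace.exp ((Complex.I * ((-t : ℝ) : ℂ)) • a) := by
  have h1 : (Complex.I * (t : ℂ)) • (1 - a)
      = (Complex.I * (t : ℂ)) • (1 : A) + (Complex.I * ((-t : ℝ) : ℂ)) • a := by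
    push_cast
    rw [smul_sub]
    module
  rw [h1, NormedSpace.exp_add_of_commute_of_mem_ball (𝕂 := ℂ)
      (((Commute.one_left a).smul_left _).smul_right _)
      ((NormedSpace.expSeries_radius_eq_top ℂ A).symm ▸ edist_lt_top _ _)
      ((NormedSpace.expSeries_radius_eq_top ℂ A).symm ▸ edist_lt_top _ _)]
  rw [← Algebra.algebraMap_eq_smul_one, ← NormedSpace.algebraMap_exp_comm,
    Algebra.algebraMap_eq_smul_one, smul_mul_assoc, one_mul, Complex.exp_eq_exp_ℂ]

lemma isHermitianWt_one_sub {A : Type*} [NormedRing A] [NormedAlgebra ℂ A] [CompleteSpace A]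
    {u a : A} (h : IsHermitianWt u a) : IsHermitianWt u (1 - a) := by
  obtain ⟨s, hs, hsq, hn⟩ := h
  refine ⟨s, hs, hsq, fun t => ?_⟩
  rw [exp_I_smul_one_sub, mul_smul_comm, smul_mul_assoc, norm_smul]
  have : ‖Complex.exp (Complex.I * t)‖ = 1 := by
    rw [mul_comm]
    exact Complex.norm_exp_ofReal_mul_I t
  rw [this, one_mul, hn]

lemma dsumOp_apply {X₁ X₂ : Type*} [NormedAddCommGroup X₁] [NormedSpace ℂ X₁]
    [NormedAddCommGroup X₂] [NormedSpace ℂ X₂]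
    (A₁ : X₁ →L[ℂ] X₁) (A₂ : X₂ →L[ℂ] X₂) (x : WithLp 1 (X₁ × X₂)) :
    dsumOp A₁ A₂ x = (WithLp.prodContinuousLinearEquiv 1 ℂ X₁ X₂).symm
      (A₁ ((WithLp.prodContinuousLinearEquiv 1 ℂ X₁ X₂ x).1),
       A₂ ((WithLp.prodContinuousLinearEquiv 1 ℂ X₁ X₂ x).2)) := rfl

lemma dsumOp_comp {X₁ X₂ : Type*} [NormedAddCommGroup X₁] [NormedSpace ℂ X₁]
    [NormedAddCommGroup X₂] [NormedSpace ℂ X₂]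
    (A₁ B₁ : X₁ →L[ℂ] X₁) (A₂ B₂ : X₂ →L[ℂ] X₂) :
    (dsumOp A₁ A₂).comp (dsumOp B₁ B₂) = dsumOp (A₁.comp B₁) (A₂.comp B₂) := by
  ext x
  simp [dsumOp_apply]

lemma conj_comp_conj {Y X : Type*} [NormedAddCommGroup X] [NormedSpace ℂ X]
    [NormedAddCommGroup Y] [NormedSpace ℂ Y] (J : Y ≃L[ℂ] X) (A B : Y →L[ℂ] Y) :
    (J.toContinuousLinearMap.comp (A.comp J.symm.toContinuousLinearMap)).comp
      (J.toContinuousLinearMap.comp (B.comp J.symm.toContinuousLinearMap)) =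
    J.toContinuousLinearMap.comp ((A.comp B).comp J.symm.toContinuousLinearMap) := by
  ext x
  simp

/-- Theorem 4.2: `T ∈ L(X)` is weighted EP with weights `E` and `F` iff there
exist Banach spaces `X₁, X₂`, an isomorphism `T₁ ∈ L(X₁)` and a bounded linear
isomorphism `J : X₁ ⊕₁ X₂ → X` with `T = J (T₁ ⊕ 0) J⁻¹`,
`T^†_{E,F} = J (T₁⁻¹ ⊕ 0) J⁻¹`, `J (I ⊕ 0) J⁻¹ ∈ H(L(X)^E)` and
`J (0 ⊕ I) J⁻¹ ∈ H(L(X)^F)`. -/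
theorem weighted_EP_iff_similarity_to_direct_sum
    {X : Type u} [NormedAddCommGroup X] [NormedSpace ℂ X] [CompleteSpace X]
    (E F T : X →L[ℂ] X)
    (hE : IsPositiveEl E ∧ IsUnit E) (hF : IsPositiveEl F ∧ IsUnit F) :
    IsWEPop E F T ↔
      ∃ (V₁ V₂ : BanachC.{u}) (T₁ : V₁.carrier ≃L[ℂ] V₁.carrier)
        (J : WithLp 1 (V₁.carrier × V₂.carrier) ≃L[ℂ] X),
        T = J.toContinuousLinearMap.comp
          ((dsumOp (T₁ : V₁.carrier →L[ℂ] V₁.carrier) 0).comp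
            J.symm.toContinuousLinearMap) ∧
        IsWMPIop E F T (J.toContinuousLinearMap.comp
          ((dsumOp ((T₁.symm : V₁.carrier ≃L[ℂ] V₁.carrier) :
              V₁.carrier →L[ℂ] V₁.carrier) 0).comp
            J.symm.toContinuousLinearMap)) ∧
        IsHermitianWt E (J.toContinuousLinearMap.comp
          ((dsumOp (1 : V₁.carrier →L[ℂ] V₁.carrier) 0).comp
            J.symm.toContinuousLinearMap)) ∧
        IsHermitianWt F (J.toContinuousLinearMap.comp
          ((dsumOp (0 : V₁.carrier →L[ℂ] V₁.carrier) 1).comp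
            J.symm.toContinuousLinearMap)) := by

  constructor
  · rintro ⟨S, ⟨h1, h2, h3, h4⟩, hc⟩
    -- pointwise facts
    have h1' : ∀ x, T (S (T x)) = T x := fun x => by
      have := ContinuousLinearMap.ext_iff.mp h1 x; simpa using this
    have h2' : ∀ x, S (T (S x)) = S x := fun x => by
      have := ContinuousLinearMap.ext_iff.mp h2 x; simpa using this
    have hc' : ∀ x, T (S x) = S (T x) := fun x => by
      have := ContinuousLinearMap.ext_iff.mp hc x; simpa using this
    set P : X →L[ℂ] X := T.comp S with hP
    have hPap : ∀ x, P x = T (S x) := fun _ => rfl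
    have hPidem : ∀ x, P (P x) = P x := fun x => by
      simp only [hPap]; rw [h1' (S x)]
    -- the two subspaces
    set K₁ : Submodule ℂ X := LinearMap.ker ((ContinuousLinearMap.id ℂ X - P : X →L[ℂ] X) : X →ₗ[ℂ] X) with hK₁
    set K₂ : Submodule ℂ X := LinearMap.ker (P : X →ₗ[ℂ] X) with hK₂
    have memK₁ : ∀ x : X, x ∈ K₁ ↔ P x = x := by
      intro x
      rw [hK₁, LinearMap.mem_ker]
      constructor
      · intro h
        have h' : x - P x = 0 := h
        exact (sub_eq_zero.mp h').symm
      · intro h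
        show x - P x = 0
        rw [h, sub_self]
    have memK₂ : ∀ x : X, x ∈ K₂ ↔ P x = 0 := fun x => Iff.rfl
    haveI cs1 : CompleteSpace K₁ :=
      (ContinuousLinearMap.isClosed_ker (ContinuousLinearMap.id ℂ X - P)).completeSpace_coe
    haveI cs2 : CompleteSpace K₂ := (ContinuousLinearMap.isClosed_ker P).completeSpace_coe
    -- T restricted to K₁ is an isomorphism, with inverse S restricted
    have hTmem : ∀ x : X, T x ∈ K₁ := by
      intro x
      rw [memK₁, hPap, h1' x]
    have hSmem : ∀ x : X, S x ∈ K₁ := by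
      intro x
      rw [memK₁, hPap, hc' (S x), h2' x]
    set Tres : K₁ →L[ℂ] K₁ :=
      ContinuousLinearMap.codRestrict (T.comp K₁.subtypeL) K₁ (fun x => hTmem x) with hTres
    set Sres : K₁ →L[ℂ] K₁ :=
      ContinuousLinearMap.codRestrict (S.comp K₁.subtypeL) K₁ (fun x => hSmem x) with hSres
    have hTresap : ∀ x : K₁, (Tres x : X) = T (x : X) := fun _ => rfl
    have hSresap : ∀ x : K₁, (Sres x : X) = S (x : X) := fun _ => rfl
    have hST : ∀ x : K₁, Sres (Tres x) = x := by
      intro x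
      apply Subtype.ext
      rw [hSresap, hTresap, ← hc' (x : X), ← hPap, (memK₁ _).mp x.2]
    have hTS : ∀ x : K₁, Tres (Sres x) = x := by
      intro x
      apply Subtype.ext
      rw [hTresap, hSresap, ← hPap, (memK₁ _).mp x.2]
    set T₁ : K₁ ≃L[ℂ] K₁ := ContinuousLinearEquiv.equivOfInverse Tres Sres hST hTS with hT₁
    -- the isomorphism J
    set j : WithLp 1 (K₁ × K₂) →L[ℂ] X :=
      (K₁.subtypeL.coprod K₂.subtypeL).comp
        (WithLp.prodContinuousLinearEquiv 1 ℂ K₁ K₂).toContinuousLinearMap with hj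
    have hjap : ∀ z : WithLp 1 (K₁ × K₂),
        j z = ((WithLp.prodContinuousLinearEquiv 1 ℂ K₁ K₂ z).1 : X) +
          ((WithLp.prodContinuousLinearEquiv 1 ℂ K₁ K₂ z).2 : X) := fun _ => rfl
    have hPmem1 : ∀ x : X, P x ∈ K₁ := fun x => (memK₁ _).mpr (hPidem x)
    have hPmem2 : ∀ x : X, x - P x ∈ K₂ := by
      intro x
      rw [memK₂]
      rw [map_sub, hPidem, sub_self]
    set j' : X →L[ℂ] WithLp 1 (K₁ × K₂) :=
      (WithLp.prodContinuousLinearEquiv 1 ℂ K₁ K₂).symm.toContinuousLinearMap.comp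
        ((ContinuousLinearMap.codRestrict P K₁ hPmem1).prod
          (ContinuousLinearMap.codRestrict (ContinuousLinearMap.id ℂ X - P) K₂
            (fun x => hPmem2 x))) with hj'
    have hj'ap : ∀ x : X, j' x = (WithLp.prodContinuousLinearEquiv 1 ℂ K₁ K₂).symm
        (⟨P x, hPmem1 x⟩, ⟨x - P x, hPmem2 x⟩) := fun _ => rfl
    have hji : ∀ z, j' (j z) = z := by
      intro z
      rw [hjap, hj'ap]
      set w := WithLp.prodContinuousLinearEquiv 1 ℂ K₁ K₂ z with hw
      have e1 : P ((w.1 : X) + (w.2 : X)) = (w.1 : X) := by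
        rw [map_add, (memK₁ _).mp w.1.2, (memK₂ _).mp w.2.2, add_zero]
      have e2 : ((w.1 : X) + (w.2 : X)) - P ((w.1 : X) + (w.2 : X)) = (w.2 : X) := by
        rw [e1]; abel
      have : ((⟨P ((w.1 : X) + (w.2 : X)), hPmem1 _⟩, ⟨((w.1 : X) + (w.2 : X)) -
          P ((w.1 : X) + (w.2 : X)), hPmem2 _⟩) : K₁ × K₂) = w :=
        Prod.ext (Subtype.ext e1) (Subtype.ext e2)
      rw [this, hw]
      exact (WithLp.prodContinuousLinearEquiv 1 ℂ K₁ K₂).symm_apply_apply z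
    have hij : ∀ x, j (j' x) = x := by
      intro x
      rw [hj'ap, hjap]
      simp
    set J : WithLp 1 (K₁ × K₂) ≃L[ℂ] X :=
      ContinuousLinearEquiv.equivOfInverse j j' hji hij with hJ
    have hJsymm : ∀ x : X, J.symm x = j' x := fun _ => rfl
    have hconj : ∀ (A₁ : K₁ →L[ℂ] K₁) (A₂ : K₂ →L[ℂ] K₂) (x : X),
        (J.toContinuousLinearMap.comp ((dsumOp A₁ A₂).comp J.symm.toContinuousLinearMap)) x
          = ((A₁ ⟨P x, hPmem1 x⟩ : X) + (A₂ ⟨x - P x, hPmem2 x⟩ : X)) := by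
      intro A₁ A₂ x
      rw [ContinuousLinearMap.comp_apply, ContinuousLinearMap.comp_apply]
      have : (J.symm.toContinuousLinearMap x) = j' x := rfl
      rw [this, hj'ap, dsumOp_apply]
      rw [ContinuousLinearEquiv.apply_symm_apply]
      have happ : J.toContinuousLinearMap = j := rfl
      rw [happ, hjap, ContinuousLinearEquiv.apply_symm_apply]
    have hTeq : T = J.toContinuousLinearMap.comp
        ((dsumOp (T₁ : K₁ →L[ℂ] K₁) 0).comp J.symm.toContinuousLinearMap) := by
      ext x
      rw [hconj]
      have : (((T₁ : K₁ →L[ℂ] K₁) (⟨P x, hPmem1 x⟩ : K₁)) : X) = T (P x) := rfl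
      rw [this]
      simp only [ContinuousLinearMap.zero_apply, ZeroMemClass.coe_zero, add_zero]
      rw [hPap, hc' x, h1' x]
    have hSeq : J.toContinuousLinearMap.comp
        ((dsumOp ((T₁.symm : K₁ ≃L[ℂ] K₁) : K₁ →L[ℂ] K₁) 0).comp
          J.symm.toContinuousLinearMap) = S := by
      ext x
      rw [hconj]
      have : ((((T₁.symm : K₁ ≃L[ℂ] K₁) : K₁ →L[ℂ] K₁) (⟨P x, hPmem1 x⟩ : K₁)) : X) = S (P x) := rfl
      rw [this]
      simp only [ContinuousLinearMap.zero_apply, ZeroMemClass.coe_zero, add_zero]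
      rw [hPap, h2' x]
    have hPeq : J.toContinuousLinearMap.comp
        ((dsumOp (1 : K₁ →L[ℂ] K₁) 0).comp J.symm.toContinuousLinearMap) = P := by
      ext x
      rw [hconj]
      simp only [ContinuousLinearMap.one_apply, ContinuousLinearMap.zero_apply,
        ZeroMemClass.coe_zero, add_zero]
    have hQeq : J.toContinuousLinearMap.comp
        ((dsumOp (0 : K₁ →L[ℂ] K₁) 1).comp J.symm.toContinuousLinearMap)
          = 1 - P := by
      ext x
      rw [hconj]
      simp only [ContinuousLinearMap.one_apply, ContinuousLinearMap.zero_apply,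
        ZeroMemClass.coe_zero, zero_add, ContinuousLinearMap.sub_apply,
        ContinuousLinearMap.one_apply]
    refine ⟨⟨K₁⟩, ⟨K₂⟩, T₁, J, hTeq, ?_, ?_, ?_⟩
    · rw [hSeq]
      exact ⟨h1, h2, h3, h4⟩
    · rw [hPeq]
      exact h3
    · rw [hQeq]
      have : (1 : X →L[ℂ] X) - P = 1 - S.comp T := by rw [hc]
      rw [this]
      exact isHermitianWt_one_sub h4
  · rintro ⟨V₁, V₂, T₁, J, hT, hMPI, _, _⟩
    refine ⟨_, hMPI, ?_⟩
    rw [hT, conj_comp_conj, conj_comp_conj, dsumOp_comp, dsumOp_comp]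
    have e : ((T₁ : V₁.carrier →L[ℂ] V₁.carrier).comp
        ((T₁.symm : V₁.carrier ≃L[ℂ] V₁.carrier) : V₁.carrier →L[ℂ] V₁.carrier))
        = (((T₁.symm : V₁.carrier ≃L[ℂ] V₁.carrier) :
            V₁.carrier →L[ℂ] V₁.carrier).comp (T₁ : V₁.carrier →L[ℂ] V₁.carrier)) := by
      ext x; simp
    rw [e]
end
end

section
/- Let X be a complex Banach space, let E, F ∈ L(X) be invertible positive operators, and let T ∈ L(X). Then T is weighted EP with weights E and F if and only if there exist complex Banach spaces X₁ and X₂, a bounded linear isomorphism T₁ ∈ L(X₁), an injective S ∈ L(X₁ ⊕₁ X₂, X), a surjective U ∈ L(X, X₁ ⊕₁ X₂), and an idempotent P ∈ H(L(X)^E) ∩ H(L(X)^F) such that T = S (T₁ ⊕ 0) U, R(P) = S(X₁ ⊕ 0) and N(P) = U^{-1}(0 ⊕ X₂). -/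
/-!
Common definitions: hermitian and positive elements of a complex unital Banach
algebra, hermitian elements with respect to the equivalent norm induced by an
invertible positive element (weight), and the weighted Moore–Penrose inverse,
both for Banach algebra elements and for bounded linear operators between
Banach spaces.
-/

noncomputable section

universe u

/-- Theorem 4.3: `T ∈ L(X)` is weighted EP with weights `E` and `F` iff there
exist Banach spaces `X₁, X₂`, an isomorphism `T₁ ∈ L(X₁)`, an injective
`S ∈ L(X₁ ⊕₁ X₂, X)`, a surjective `U ∈ L(X, X₁ ⊕₁ X₂)` and an idempotent
`P ∈ H(L(X)^E) ∩ H(L(X)^F)` with `T = S (T₁ ⊕ 0) U`, `R(P) = S(X₁ ⊕ 0)` and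
`N(P) = U⁻¹(0 ⊕ X₂)`. -/
theorem weighted_EP_iff_injective_surjective_factorization
    {X : Type u} [NormedAddCommGroup X] [NormedSpace ℂ X] [CompleteSpace X]
    (E F T : X →L[ℂ] X)
    (hE : IsPositiveEl E ∧ IsUnit E) (hF : IsPositiveEl F ∧ IsUnit F) :
    IsWEPop E F T ↔
      ∃ (V₁ V₂ : BanachC.{u}) (T₁ : V₁.carrier ≃L[ℂ] V₁.carrier)
        (S : WithLp 1 (V₁.carrier × V₂.carrier) →L[ℂ] X)
        (U : X →L[ℂ] WithLp 1 (V₁.carrier × V₂.carrier))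
        (P : X →L[ℂ] X),
        Function.Injective S ∧ Function.Surjective U ∧
        P.comp P = P ∧ IsHermitianWt E P ∧ IsHermitianWt F P ∧
        T = S.comp ((dsumOp (T₁ : V₁.carrier →L[ℂ] V₁.carrier) 0).comp U) ∧
        Set.range ⇑P =
          ⇑S '' {v : WithLp 1 (V₁.carrier × V₂.carrier) |
            (WithLp.equiv 1 (V₁.carrier × V₂.carrier) v).2 = 0} ∧
        {x : X | P x = 0} =
          ⇑U ⁻¹' {v : WithLp 1 (V₁.carrier × V₂.carrier) |
            (WithLp.equiv 1 (V₁.carrier × V₂.carrier) v).1 = 0} := by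
  
  constructor
  · rintro ⟨S₀, ⟨h1, h2, hEh, hFh⟩, hcomm⟩
    set P : X →L[ℂ] X := T.comp S₀ with hPdef
    have h1' : ∀ x, T (S₀ (T x)) = T x := fun x => DFunLike.congr_fun h1 x
    have h2' : ∀ x, S₀ (T (S₀ x)) = S₀ x := fun x => DFunLike.congr_fun h2 x
    have hc' : ∀ x, T (S₀ x) = S₀ (T x) := fun x => DFunLike.congr_fun hcomm x
    have hPT : ∀ x, P (T x) = T x := fun x => h1' x
    have hTP : ∀ x, T (P x) = T x := by
      intro x
      show T (T (S₀ x)) = T x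
      rw [hc' x, h1' x]
    have hPS : ∀ x, P (S₀ x) = S₀ x := by
      intro x
      show T (S₀ (S₀ x)) = S₀ x
      rw [hc' (S₀ x), h2' x]
    have hPP : ∀ x, P (P x) = P x := by
      intro x
      show T (S₀ (T (S₀ x))) = T (S₀ x)
      rw [h2']
    set K : Submodule ℂ X := LinearMap.range (P : X →ₗ[ℂ] X) with hKdef
    set N : Submodule ℂ X := LinearMap.ker (P : X →ₗ[ℂ] X) with hNdef
    have hmemK : ∀ x : X, x ∈ K ↔ P x = x := by
      intro x
      constructor
      · rintro ⟨y, rfl⟩; exact hPP y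
      · intro h; exact ⟨x, h⟩
    have hKclosed : IsClosed (K : Set X) := by
      have : (K : Set X) = (LinearMap.ker ((ContinuousLinearMap.id ℂ X - P : X →L[ℂ] X) : X →ₗ[ℂ] X) : Set X) := by
        ext x
        simp only [SetLike.mem_coe, hmemK, LinearMap.mem_ker, ContinuousLinearMap.coe_sub',
          Pi.sub_apply, ContinuousLinearMap.coe_id', id_eq, sub_eq_zero, ContinuousLinearMap.coe_coe]
        exact ⟨fun h => h.symm, fun h => h.symm⟩
      rw [this]
      exact ContinuousLinearMap.isClosed_ker _
    have hNclosed : IsClosed (N : Set X) := ContinuousLinearMap.isClosed_ker P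
    haveI : CompleteSpace K := hKclosed.completeSpace_coe
    haveI : CompleteSpace N := hNclosed.completeSpace_coe
    -- the restricted operators
    have hTmem : ∀ x : K, T (x : X) ∈ K := fun x => (hmemK _).mpr (hPT x)
    have hSmem : ∀ x : K, S₀ (x : X) ∈ K := fun x => (hmemK _).mpr (hPS x)
    set TK : K →L[ℂ] K := (T.comp K.subtypeL).codRestrict K (fun x => hTmem x) with hTKdef
    set SK : K →L[ℂ] K := (S₀.comp K.subtypeL).codRestrict K (fun x => hSmem x) with hSKdef
    have hleft : Function.LeftInverse SK TK := by
      intro x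
      apply Subtype.ext
      show S₀ (T (x : X)) = (x : X)
      rw [← hc']
      exact (hmemK _).mp x.2
    have hright : Function.RightInverse SK TK := by
      intro x
      apply Subtype.ext
      show P (x : X) = (x : X)
      exact (hmemK _).mp x.2
    set T₁ : K ≃L[ℂ] K := ContinuousLinearEquiv.equivOfInverse TK SK hleft hright with hT₁def
    set e := WithLp.prodContinuousLinearEquiv 1 ℂ K N with hedef
    set Sop : WithLp 1 (↥K × ↥N) →L[ℂ] X :=
      (K.subtypeL.coprod N.subtypeL).comp e.toContinuousLinearMap with hSopdef
    have hSop : ∀ v : WithLp 1 (↥K × ↥N),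
        Sop v = ((e v).1 : X) + ((e v).2 : X) := fun v => rfl
    have hPmem : ∀ x : X, P x ∈ K := fun x => ⟨x, rfl⟩
    have hNmem : ∀ x : X, x - P x ∈ N := by
      intro x
      show P (x - P x) = 0
      rw [map_sub, hPP, sub_self]
    set Uop : X →L[ℂ] WithLp 1 (↥K × ↥N) :=
      e.symm.toContinuousLinearMap.comp
        ((P.codRestrict K hPmem).prod
          ((ContinuousLinearMap.id ℂ X - P).codRestrict N
            (fun x => hNmem x))) with hUopdef
    have hUop : ∀ x : X, e (Uop x) = (⟨P x, hPmem x⟩, ⟨x - P x, hNmem x⟩) := by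
      intro x
      show e (e.symm _) = _
      rw [e.apply_symm_apply]
      refine Prod.ext (Subtype.ext rfl) (Subtype.ext rfl)
    refine ⟨⟨↥K⟩, ⟨↥N⟩, T₁, Sop, Uop, P, ?_, ?_, ?_, ?_, ?_, ?_, ?_, ?_⟩
    · -- injectivity of Sop
      intro a b hab
      rw [hSop, hSop] at hab
      have h1ab : P (((e a).1 : X) + ((e a).2 : X)) = ((e a).1 : X) := by
        rw [map_add, (hmemK _).mp (e a).1.2, show P ((e a).2 : X) = 0 from ((e a).2).2, add_zero]
      have h1ab' : P (((e b).1 : X) + ((e b).2 : X)) = ((e b).1 : X) := by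
        rw [map_add, (hmemK _).mp (e b).1.2, show P ((e b).2 : X) = 0 from ((e b).2).2, add_zero]
      have hfst : ((e a).1 : X) = ((e b).1 : X) := by rw [← h1ab, ← h1ab', hab]
      have hsnd : ((e a).2 : X) = ((e b).2 : X) := by
        have := hab
        rw [hfst] at this
        exact add_left_cancel this
      have : e a = e b := Prod.ext (Subtype.ext hfst) (Subtype.ext hsnd)
      exact e.injective this
    · -- surjectivity of Uop
      intro v
      refine ⟨((e v).1 : X) + ((e v).2 : X), ?_⟩
      apply e.injective
      rw [hUop]
      have hfst : P (((e v).1 : X) + ((e v).2 : X)) = ((e v).1 : X) := by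
        rw [map_add, (hmemK _).mp (e v).1.2, show P ((e v).2 : X) = 0 from ((e v).2).2, add_zero]
      refine Prod.ext (Subtype.ext ?_) (Subtype.ext ?_)
      · exact hfst
      · show ((e v).1 : X) + ((e v).2 : X) - P _ = ((e v).2 : X)
        rw [hfst]; abel
    · exact ContinuousLinearMap.ext fun x => hPP x
    · exact hEh
    · rw [← hcomm] at hFh; exact hFh
    · -- factorization
      ext x
      show T x = Sop (dsumOp (T₁ : ↥K →L[ℂ] ↥K) 0 (Uop x))
      have hd : dsumOp (T₁ : ↥K →L[ℂ] ↥K) 0 (Uop x)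
          = e.symm (T₁ (e (Uop x)).1, 0) := by
        show e.symm ((ContinuousLinearMap.prodMap _ _) (e (Uop x))) = _
        rfl
      rw [hd, hSop]
      rw [e.apply_symm_apply]
      show T x = (T (P x) + (0:X))
      rw [add_zero, hTP]
    · -- range of P
      ext x
      constructor
      · rintro ⟨y, rfl⟩
        refine ⟨e.symm (⟨P y, hPmem y⟩, 0), ?_, ?_⟩
        · show (e (e.symm (⟨P y, hPmem y⟩, 0))).2 = 0
          rw [e.apply_symm_apply]
        · rw [hSop, e.apply_symm_apply]
          show P y + (0:X) = P y
          rw [add_zero]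
      · rintro ⟨v, hv, rfl⟩
        have hv2 : (e v).2 = 0 := hv
        have hv2x : ((e v).2 : X) = 0 := by rw [hv2]; rfl
        rw [hSop, hv2x, add_zero]
        exact ⟨((e v).1 : X), (hmemK _).mp (e v).1.2⟩
    · -- kernel of P
      ext x
      show P x = 0 ↔ _
      constructor
      · intro h
        show (e (Uop x)).1 = 0
        rw [hUop]
        exact Subtype.ext h
      · intro h
        have hq : (e (Uop x)).1 = 0 := h
        rw [hUop] at hq
        simpa using congrArg Subtype.val hq
  · rintro ⟨V₁, V₂, T₁, S, U, P, hSinj, hUsurj, hPP, hPE, hPF, hT, hrange, hker⟩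
    set W := WithLp 1 (V₁.carrier × V₂.carrier) with hWdef
    set e := WithLp.prodContinuousLinearEquiv 1 ℂ V₁.carrier V₂.carrier with hedef
    have hPP' : ∀ x, P (P x) = P x := fun x => DFunLike.congr_fun hPP x
    have hTx : ∀ x : X, T x = S (e.symm (T₁ (e (U x)).1, 0)) := by
      intro x
      conv_lhs => rw [hT]
      show S (dsumOp (T₁ : V₁.carrier →L[ℂ] V₁.carrier) 0 (U x)) = _
      rfl
    have hkermem : ∀ x : X, P x = 0 ↔ (e (U x)).1 = 0 := by
      intro x
      have := Set.ext_iff.mp hker x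
      exact this
    have hrangemem : ∀ x : X, (x ∈ Set.range ⇑P) ↔
        ∃ v : W, (e v).2 = 0 ∧ S v = x := by
      intro x
      rw [hrange]
      constructor
      · rintro ⟨v, hv, rfl⟩; exact ⟨v, hv, rfl⟩
      · rintro ⟨v, hv, rfl⟩; exact ⟨v, hv, rfl⟩
    have hfix : ∀ x : X, x ∈ Set.range ⇑P ↔ P x = x := by
      intro x
      constructor
      · rintro ⟨y, rfl⟩; exact hPP' y
      · intro h; exact ⟨x, h⟩
    -- kernel of T equals kernel of P
    have hkerT : ∀ x : X, T x = 0 ↔ P x = 0 := by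
      intro x
      rw [hkermem, hTx]
      constructor
      · intro h
        have h0 : S (e.symm (T₁ (e (U x)).1, 0)) = S 0 := by rw [h, map_zero]
        have := hSinj h0
        have h1 : (T₁ (e (U x)).1, (0:V₂.carrier)) = e 0 := by
          rw [← this, e.apply_symm_apply]
        have h2 : T₁ (e (U x)).1 = 0 := by
          have := congrArg Prod.fst h1
          simpa using this
        have := congrArg T₁.symm h2
        simpa using this
      · intro h
        rw [h, map_zero]
        have : e.symm ((0 : V₁.carrier), (0 : V₂.carrier)) = 0 := by
          apply e.injective
          rw [e.apply_symm_apply, map_zero]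
          rfl
        rw [this, map_zero]
    have hPT : ∀ x : X, P (T x) = T x := by
      intro x
      apply (hfix (T x)).mp
      apply (hrangemem (T x)).mpr
      refine ⟨e.symm (T₁ (e (U x)).1, 0), ?_, (hTx x).symm⟩
      show (e (e.symm _)).2 = 0
      rw [e.apply_symm_apply]
    have hTP : ∀ x : X, T (P x) = T x := by
      intro x
      have h0 : T (x - P x) = 0 := by
        apply (hkerT _).mpr
        rw [map_sub, hPP', sub_self]
      rw [map_sub] at h0
      have := sub_eq_zero.mp h0
      exact this.symm
    set K : Submodule ℂ X := LinearMap.range (P : X →ₗ[ℂ] X) with hKdef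
    have hmemK : ∀ x : X, x ∈ K ↔ P x = x := by
      intro x
      constructor
      · rintro ⟨y, rfl⟩; exact hPP' y
      · intro h; exact ⟨x, h⟩
    have hKclosed : IsClosed (K : Set X) := by
      have : (K : Set X) = (LinearMap.ker ((ContinuousLinearMap.id ℂ X - P : X →L[ℂ] X) : X →ₗ[ℂ] X) : Set X) := by
        ext x
        simp only [SetLike.mem_coe, hmemK, LinearMap.mem_ker, ContinuousLinearMap.coe_sub',
          Pi.sub_apply, ContinuousLinearMap.coe_id', id_eq, sub_eq_zero, ContinuousLinearMap.coe_coe]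
        exact ⟨fun h => h.symm, fun h => h.symm⟩
      rw [this]
      exact ContinuousLinearMap.isClosed_ker _
    haveI : CompleteSpace K := hKclosed.completeSpace_coe
    have hTmem : ∀ x : K, T (x : X) ∈ K := fun x => ⟨T x, hPT x⟩
    set TK : K →L[ℂ] K := (T.comp K.subtypeL).codRestrict K (fun x => hTmem x) with hTKdef
    have hTKinj : LinearMap.ker (TK : K →ₗ[ℂ] K) = ⊥ := by
      rw [LinearMap.ker_eq_bot']
      intro m hm
      have h0 : T (m : X) = 0 := congrArg Subtype.val hm
      have h1 : P (m : X) = 0 := (hkerT _).mp h0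
      have h2 : (m : X) = 0 := by rw [← (hmemK _).mp m.2, h1]
      exact Subtype.ext h2
    have hTKsurj : LinearMap.range (TK : K →ₗ[ℂ] K) = ⊤ := by
      rw [LinearMap.range_eq_top]
      intro y
      have hy : (y : X) ∈ Set.range ⇑P := ⟨y, (hmemK _).mp y.2⟩
      obtain ⟨w, hw2, hwS⟩ := (hrangemem _).mp hy
      obtain ⟨x, hx⟩ := hUsurj (e.symm (T₁.symm (e w).1, 0))
      have hTx' : T x = (y : X) := by
        rw [hTx x, hx, e.apply_symm_apply]
        show S (e.symm (T₁ (T₁.symm (e w).1), 0)) = _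
        rw [T₁.apply_symm_apply]
        have hwrw : e.symm ((e w).1, (0:V₂.carrier)) = w := by
          apply e.injective
          rw [e.apply_symm_apply]
          exact Prod.ext rfl hw2.symm
        rw [hwrw, hwS]
      refine ⟨⟨P x, ⟨x, rfl⟩⟩, ?_⟩
      apply Subtype.ext
      show T (P x) = (y : X)
      rw [hTP, hTx']
    set TKe : K ≃L[ℂ] K := ContinuousLinearEquiv.ofBijective TK hTKinj hTKsurj with hTKedef
    have hTKe : ∀ z : K, TKe z = TK z := fun z => rfl
    set S' : X →L[ℂ] X :=
      K.subtypeL.comp ((TKe.symm : K →L[ℂ] K).comp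
        (P.codRestrict K (fun x => ⟨x, rfl⟩))) with hS'def
    have hS' : ∀ x : X, S' x = ((TKe.symm ⟨P x, ⟨x, rfl⟩⟩ : K) : X) := fun x => rfl
    have hTS' : ∀ x : X, T (S' x) = P x := by
      intro x
      rw [hS']
      have : T ((TKe.symm ⟨P x, ⟨x, rfl⟩⟩ : K) : X)
          = ((TK (TKe.symm ⟨P x, ⟨x, rfl⟩⟩) : K) : X) := rfl
      rw [this, ← hTKe, TKe.apply_symm_apply]
    have hS'T : ∀ x : X, S' (T x) = P x := by
      intro x
      rw [hS']
      have h1 : (⟨P (T x), ⟨T x, rfl⟩⟩ : K) = TKe ⟨P x, ⟨x, rfl⟩⟩ := by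
        apply Subtype.ext
        rw [hTKe]
        show P (T x) = T (P x)
        rw [hPT, hTP]
      rw [h1, TKe.symm_apply_apply]
    have hTS'op : T.comp S' = P := ContinuousLinearMap.ext fun x => hTS' x
    have hS'Top : S'.comp T = P := ContinuousLinearMap.ext fun x => hS'T x
    refine ⟨S', ⟨?_, ?_, ?_, ?_⟩, ?_⟩
    · ext x
      show T (S' (T x)) = T x
      rw [hS'T, hTP]
    · ext x
      show S' (T (S' x)) = S' x
      rw [hTS']
      show ((TKe.symm ⟨P (P x), ⟨P x, rfl⟩⟩ : K) : X) = ((TKe.symm ⟨P x, ⟨x, rfl⟩⟩ : K) : X)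
      exact congrArg (fun z : ↥K => ((TKe.symm z : ↥K) : X)) (Subtype.ext (hPP' x))
    · rw [hTS'op]; exact hPE
    · rw [hS'Top]; exact hPF
    · rw [hTS'op, hS'Top]
end
end

section
/- Symmetry of weights for weighted EP operators: Let X be a complex Banach space, let E, F ∈ L(X) be invertible positive operators, and let T ∈ L(X). Then the following are equivalent: (i) T is weighted EP with weights E and F; (ii) T is weighted EP with weights F and E; (iii) T is weighted EP both with weights E and E and with weights F and F. -/
/-!
Common definitions: hermitian and positive elements of a complex unital Banach
algebra, hermitian elements with respect to the equivalent norm induced by an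
invertible positive element (weight), and the weighted Moore–Penrose inverse,
both for Banach algebra elements and for bounded linear operators between
Banach spaces.
-/

noncomputable section

/-- Uniqueness of the group (commuting) inverse in a monoid. -/
lemma group_inv_unique {M : Type*} [Monoid M] {a b c : M}
    (h1 : a * b * a = a) (h2 : b * a * b = b) (h3 : a * b = b * a)
    (h1' : a * c * a = a) (h2' : c * a * c = c) (h3' : a * c = c * a) :
    b = c := by
  have hab : a * b = a * c := by
    have e1 : a * c = (a * b) * (a * c) := by
      conv_lhs => rw [← h1]
      rw [mul_assoc]
    have e2 : (a * b) * (a * c) = a * b := by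
      rw [h3, h3', mul_assoc, ← mul_assoc a c a, h1', ← h3]
    rw [← e2, ← e1]
  calc b = b * a * b := h2.symm
    _ = b * (a * b) := by rw [mul_assoc]
    _ = b * (a * c) := by rw [hab]
    _ = (b * a) * c := by rw [← mul_assoc]
    _ = (a * b) * c := by rw [← h3]
    _ = (a * c) * c := by rw [hab]
    _ = (c * a) * c := by rw [h3']
    _ = c := h2'

lemma group_inv_unique_clm {X : Type*} [NormedAddCommGroup X] [NormedSpace ℂ X]
    {a b c : X →L[ℂ] X}
    (h1 : (a.comp b).comp a = a) (h2 : (b.comp a).comp b = b) (h3 : a.comp b = b.comp a)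
    (h1' : (a.comp c).comp a = a) (h2' : (c.comp a).comp c = c) (h3' : a.comp c = c.comp a) :
    b = c :=
  group_inv_unique (a := a) (b := b) (c := c) h1 h2 h3 h1' h2' h3'


/-- **Symmetry of weights for weighted EP operators.** `T` is weighted EP with
weights `E` and `F` iff it is weighted EP with weights `F` and `E`, iff it is
weighted EP both with weights `E, E` and with weights `F, F`. -/

theorem weighted_EP_weights_symmetric
    {X : Type*} [NormedAddCommGroup X] [NormedSpace ℂ X] [CompleteSpace X]
    (E F T : X →L[ℂ] X)
    (hE : IsPositiveEl E ∧ IsUnit E) (hF : IsPositiveEl F ∧ IsUnit F) :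
    (IsWEPop E F T ↔ IsWEPop F E T) ∧
    (IsWEPop E F T ↔ (IsWEPop E E T ∧ IsWEPop F F T)) := by
  have main : ∀ (G H : X →L[ℂ] X), IsWEPop G H T → IsWEPop H G T := by
    rintro G H ⟨S, ⟨h1, h2, hG, hH⟩, hc⟩
    exact ⟨S, ⟨h1, h2, hc ▸ hH, hc.symm ▸ hG⟩, hc⟩
  have split : IsWEPop E F T → IsWEPop E E T ∧ IsWEPop F F T := by
    rintro ⟨S, ⟨h1, h2, hEh, hFh⟩, hc⟩
    exact ⟨⟨S, ⟨h1, h2, hEh, hc ▸ hEh⟩, hc⟩, ⟨S, ⟨h1, h2, hc.symm ▸ hFh, hFh⟩, hc⟩⟩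
  have merge : IsWEPop E E T ∧ IsWEPop F F T → IsWEPop E F T := by
    rintro ⟨⟨S1, ⟨ha1, hb1, hE1, hE1p⟩, hc1⟩, ⟨S2, ⟨ha2, hb2, hF2, hF2p⟩, hc2⟩⟩
    have heq : S1 = S2 := group_inv_unique_clm ha1 hb1 hc1 ha2 hb2 hc2
    subst heq
    exact ⟨S1, ⟨ha1, hb1, hE1, hF2p⟩, hc1⟩
  constructor
  · exact ⟨main E F, main F E⟩
  · exact ⟨split, fun h => merge h⟩
end
end

section
/- Let A be a complex unital Banach algebra, let e, f ∈ A be invertible positive elements, and let a ∈ A. Then the following are equivalent: (i) a is weighted EP with weights e and f; (ii) there exist an invertible c ∈ A and an idempotent p ∈ A (p² = p) such that c p c^{-1} is hermitian in A^e and hermitian in A^f, p a p is invertible in the Banach algebra p A p with unit p (i.e. there exists b ∈ A with b = p b p and (p a p) b = b (p a p) = p), and a = c (p a p) c^{-1}; (iii) a is weighted EP with weights f and e; (iv) a is weighted EP both with weights e and e and with weights f and f. -/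
/-!
Common definitions: hermitian and positive elements of a complex unital Banach
algebra, hermitian elements with respect to the equivalent norm induced by an
invertible positive element (weight), and the weighted Moore–Penrose inverse,
both for Banach algebra elements and for bounded linear operators between
Banach spaces.
-/

noncomputable section

private lemma conj_mul_aux {A : Type*} [Ring A] {x y u v : A} (hyx : y * x = 1) :
    (x * u * y) * (x * v * y) = x * (u * v) * y := by
  calc (x * u * y) * (x * v * y) = x * u * (y * x) * v * y := by noncomm_ring
    _ = x * (u * v) * y := by rw [hyx]; noncomm_ring

private lemma group_inv_unique_aux {A : Type*} [Ring A] {a b1 b2 : A}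
    (h1 : a * b1 * a = a) (h2 : b1 * a * b1 = b1) (h3 : a * b1 = b1 * a)
    (h1' : a * b2 * a = a) (h2' : b2 * a * b2 = b2) (h3' : a * b2 = b2 * a) :
    b1 = b2 := by
  have e1 : a * b2 * (a * b1) = a * b1 := by
    calc a * b2 * (a * b1) = a * b2 * a * b1 := by noncomm_ring
      _ = a * b1 := by rw [h1']
  have e2 : a * b2 = a * b2 * (a * b1) := by
    calc a * b2 = b2 * a := h3'
      _ = b2 * (a * b1 * a) := by rw [h1]
      _ = b2 * a * (b1 * a) := by noncomm_ring
      _ = a * b2 * (a * b1) := by rw [← h3', ← h3]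
  have hpq : a * b1 = a * b2 := (e2.trans e1).symm
  calc b1 = b1 * a * b1 := h2.symm
    _ = b1 * (a * b1) := by noncomm_ring
    _ = b1 * (a * b2) := by rw [hpq]
    _ = a * b1 * b2 := by rw [h3]; noncomm_ring
    _ = a * b2 * b2 := by rw [hpq]
    _ = b2 * a * b2 := by rw [h3']
    _ = b2 := h2'

/-- Theorem 4.5: `a` is weighted EP with weights `e` and `f` iff there exist an
invertible `c` and an idempotent `p` such that `c p c⁻¹` is hermitian in `A^e`
and in `A^f`, `p a p` is invertible in the Banach algebra `p A p` with unit
`p`, and `a = c (p a p) c⁻¹`; iff `a` is weighted EP with weights `f` and `e`;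
iff `a` is weighted EP both with weights `e, e` and with weights `f, f`. -/
theorem weighted_EP_iff_similarity_factorization
    {A : Type*} [NormedRing A] [NormedAlgebra ℂ A] [CompleteSpace A]
    (e f a : A)
    (he : IsPositiveEl e ∧ IsUnit e) (hf : IsPositiveEl f ∧ IsUnit f) :
    (IsWEP e f a ↔
      ∃ (c : Aˣ) (p : A), p * p = p ∧
        IsHermitianWt e ((c : A) * p * ((c⁻¹ : Aˣ) : A)) ∧
        IsHermitianWt f ((c : A) * p * ((c⁻¹ : Aˣ) : A)) ∧
        (∃ b : A, b = p * b * p ∧ (p * a * p) * b = p ∧ b * (p * a * p) = p) ∧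
        a = (c : A) * (p * a * p) * ((c⁻¹ : Aˣ) : A)) ∧
    (IsWEP e f a ↔ IsWEP f e a) ∧
    (IsWEP e f a ↔ (IsWEP e e a ∧ IsWEP f f a)) := by
  constructor
  · constructor
    · rintro ⟨b, ⟨h1, h2, h3, h4⟩, h5⟩
      have hpb : a * b * b = b := by rw [h5]; exact h2
      have hbp : b * (a * b) = b := by rw [← mul_assoc]; exact h2
      have hpap : a * b * a * (a * b) = a := by
        rw [h1, h5, ← mul_assoc, h1]
      refine ⟨1, a * b, ?_, ?_, ?_, ⟨b, ?_, ?_, ?_⟩, ?_⟩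
      · calc a * b * (a * b) = a * b * a * b := by noncomm_ring
          _ = a * b := by rw [h1]
      · simpa using h3
      · simp only [inv_one, Units.val_one, one_mul, mul_one]
        rw [h5]; exact h4
      · rw [hpb, hbp]
      · rw [hpap]
      · rw [hpap, ← h5]
      · simp [hpap]
    · rintro ⟨c, p, hp, hher_e, hher_f, ⟨b, hb, hb1, hb2⟩, ha⟩
      have hyx : ((c⁻¹ : Aˣ) : A) * (c : A) = 1 := c.inv_mul
      have hpd : p * (p * a * p) = p * a * p := by
        calc p * (p * a * p) = p * p * a * p := by noncomm_ring
          _ = p * a * p := by rw [hp]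
      have hpb : p * b = b := by
        rw [hb]
        calc p * (p * b * p) = p * p * b * p := by noncomm_ring
          _ = p * b * p := by rw [hp]
      have key1 : a * ((c : A) * b * ((c⁻¹ : Aˣ) : A))
          = (c : A) * p * ((c⁻¹ : Aˣ) : A) := by
        rw [ha, conj_mul_aux hyx, hb1]
      have key2 : ((c : A) * b * ((c⁻¹ : Aˣ) : A)) * a
          = (c : A) * p * ((c⁻¹ : Aˣ) : A) := by
        rw [ha, conj_mul_aux hyx, hb2]
      refine ⟨(c : A) * b * ((c⁻¹ : Aˣ) : A), ⟨?_, ?_, ?_, ?_⟩, ?_⟩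
      · rw [key1, ha, conj_mul_aux hyx, hpd]
      · rw [key2, conj_mul_aux hyx, hpb]
      · rw [key1]; exact hher_e
      · rw [key2]; exact hher_f
      · rw [key1, key2]
  · constructor
    · constructor <;>
        · rintro ⟨b, ⟨h1, h2, h3, h4⟩, h5⟩
          exact ⟨b, ⟨h1, h2, by rw [h5]; exact h4, by rw [← h5]; exact h3⟩, h5⟩
    · constructor
      · rintro ⟨b, ⟨h1, h2, h3, h4⟩, h5⟩
        exact ⟨⟨b, ⟨h1, h2, h3, by rw [← h5]; exact h3⟩, h5⟩,
          ⟨b, ⟨h1, h2, by rw [h5]; exact h4, h4⟩, h5⟩⟩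
      · rintro ⟨⟨b1, ⟨h1, h2, h3, h4⟩, h5⟩, ⟨b2, ⟨g1, g2, g3, g4⟩, g5⟩⟩
        have hbb : b1 = b2 := group_inv_unique_aux h1 h2 h5 g1 g2 g5
        exact ⟨b1, ⟨h1, h2, h3, by rw [hbb]; exact g4⟩, h5⟩
end
end
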